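/- Let d ≥ 1, m = 2d, r, t ∈ ℂ, n ≥ 1, and κ = (r−t)/√m + √m·t. For θ : Fin n × Fin m → ℝ and x ∈ ℤ^d define P(θ, x) = Σ_{b∈Fin m} | Σ_{a∈(Fin m)^n, e(a_1)+⋯+e(a_n) = x, a_1 = b} exp(i·Σ_j θ(j, a_j)) · Ξ(a) · κ |². Then for every x ∈ ℤ^d, (1/(2π)^{nm}) · ∫_{[0,2π]^{Fin n × Fin m}} P(θ, x) dθ = |κ|² · Σ_{a∈(Fin m)^n, e(a_1)+⋯+e(a_n) = x} |Ξ(a)|². -/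

import Mathlib

noncomputable section

open scoped BigOperators
open MeasureTheory Real

/-- `Ξ(a_1, …, a_n) = ∏_{j=1}^{n-1} (t + (r - t) δ_{a_j, a_{j+1}})` (empty product is 1). -/
def Xi (m n : ℕ) (r t : ℂ) (a : Fin n → Fin m) : ℂ :=
  ∏ j : Fin n, if h : (j : ℕ) + 1 < n then
    (t + (r - t) * (if a j = a ⟨(j : ℕ) + 1, h⟩ then 1 else 0)) else 1

/-- The `2d` signed standard basis vectors of `ℤ^d`: `e(2k) = u_k`, `e(2k+1) = -u_k`. -/
def eZ (d : ℕ) (a : Fin (2 * d)) : Fin d → ℤ :=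
  Pi.single ⟨(a : ℕ) / 2, by have := a.2; omega⟩ (if (a : ℕ) % 2 = 0 then 1 else -1)

/-- The cube `[0, 2π]^{Fin n × Fin m}` of phase records. -/
def phaseCube (n m : ℕ) : Set (Fin n × Fin m → ℝ) :=
  Set.pi Set.univ (fun _ => Set.Icc 0 (2 * π))


lemma exp_tpi : Complex.exp (Complex.I * ((2*π : ℝ) : ℂ)) = 1 := by
  rw [show Complex.I * ((2*π : ℝ) : ℂ) = 2*π*Complex.I by push_cast; ring,
    Complex.exp_two_pi_mul_I]

lemma coord_int (c : ℂ) (hc : c = 0 ∨ c = 1 ∨ c = -1) :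
    ∫ θ in Set.Icc (0:ℝ) (2*π), Complex.exp (Complex.I * c * θ)
      = if c = 0 then ((2*π : ℝ) : ℂ) else 0 := by
  rcases hc with h | h | h
  · subst h
    simp only [mul_zero, zero_mul, Complex.exp_zero, if_true]
    rw [setIntegral_const, Measure.real, Real.volume_Icc,
      ENNReal.toReal_ofReal (by nlinarith [pi_pos] : (0:ℝ) ≤ 2*π - 0)]
    simp
  · subst h
    have h1 : Complex.I * 1 ≠ 0 := by simp [Complex.I_ne_zero]
    rw [integral_Icc_eq_integral_Ioc, ← intervalIntegral.integral_of_le (by positivity),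
      integral_exp_mul_complex h1]
    have := exp_tpi
    push_cast at this ⊢
    rw [mul_one, this]
    norm_num
  · subst h
    have h1 : Complex.I * (-1) ≠ 0 := by simp [Complex.I_ne_zero]
    rw [integral_Icc_eq_integral_Ioc, ← intervalIntegral.integral_of_le (by positivity),
      integral_exp_mul_complex h1]
    have := exp_tpi
    push_cast at this ⊢
    rw [show Complex.I * -1 * (2*(π:ℂ)) = -(Complex.I * (2*π)) by ring, Complex.exp_neg, this]
    norm_num


def cf {n m : ℕ} (a a' : Fin n → Fin m) (p : Fin n × Fin m) : ℂ :=
  (if a p.1 = p.2 then 1 else 0) - (if a' p.1 = p.2 then 1 else 0)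

lemma cf_cases {n m : ℕ} (a a' : Fin n → Fin m) (p : Fin n × Fin m) :
    cf a a' p = 0 ∨ cf a a' p = 1 ∨ cf a a' p = -1 := by
  unfold cf
  split <;> split <;> norm_num

lemma sum_ind {n m : ℕ} (a : Fin n → Fin m) (θ : Fin n × Fin m → ℝ) :
    ∑ p : Fin n × Fin m, (if a p.1 = p.2 then (1:ℂ) else 0) * (θ p : ℂ)
      = ((∑ j : Fin n, θ (j, a j) : ℝ) : ℂ) := by
  rw [Fintype.sum_prod_type]
  push_cast
  congr 1
  ext j
  rw [Finset.sum_congr rfl (fun b _ => by rw [ite_mul, one_mul, zero_mul]),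
    Finset.sum_ite_eq]
  simp

lemma phase_prod {n m : ℕ} (a a' : Fin n → Fin m) (θ : Fin n × Fin m → ℝ) :
    Complex.exp (Complex.I * ((∑ j : Fin n, θ (j, a j) : ℝ) : ℂ)) *
      (starRingEnd ℂ) (Complex.exp (Complex.I * ((∑ j : Fin n, θ (j, a' j) : ℝ) : ℂ)))
      = ∏ p : Fin n × Fin m, Complex.exp (Complex.I * cf a a' p * (θ p : ℂ)) := by
  rw [← Complex.exp_conj, ← Complex.exp_sum, ← Complex.exp_add]
  congr 1
  simp only [cf, map_mul, Complex.conj_I, Complex.conj_ofReal]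
  rw [show ∀ x y : ℂ, Complex.I * x + -Complex.I * y = Complex.I * (x - y) from
    fun x y => by ring]
  rw [← sum_ind a θ, ← sum_ind a' θ, ← Finset.sum_sub_distrib]
  rw [Finset.mul_sum]
  congr 1; ext p; ring

lemma key {n m : ℕ} (a a' : Fin n → Fin m) :
    (∫ θ in phaseCube n m,
        Complex.exp (Complex.I * ((∑ j : Fin n, θ (j, a j) : ℝ) : ℂ)) *
          (starRingEnd ℂ) (Complex.exp (Complex.I * ((∑ j : Fin n, θ (j, a' j) : ℝ) : ℂ))))
      = if a = a' then (((2*π)^(n*m) : ℝ) : ℂ) else 0 := by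
  simp_rw [phase_prod a a']
  have hmeas : MeasurableSet (phaseCube n m) :=
    MeasurableSet.univ_pi (fun _ => measurableSet_Icc)
  rw [← integral_indicator hmeas]
  have hind : ∀ θ : Fin n × Fin m → ℝ,
      Set.indicator (phaseCube n m)
        (fun θ => ∏ p : Fin n × Fin m, Complex.exp (Complex.I * cf a a' p * (θ p : ℂ))) θ
      = ∏ p : Fin n × Fin m,
          Set.indicator (Set.Icc 0 (2*π))
            (fun u : ℝ => Complex.exp (Complex.I * cf a a' p * (u : ℂ))) (θ p) := by
    intro θ
    by_cases h : θ ∈ phaseCube n m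
    · rw [Set.indicator_of_mem h]
      refine Finset.prod_congr rfl fun p _ => ?_
      exact (Set.indicator_of_mem (h p (Set.mem_univ p))
        (fun u : ℝ => Complex.exp (Complex.I * cf a a' p * (u : ℂ)))).symm
    · rw [Set.indicator_of_notMem h]
      simp only [phaseCube, Set.mem_pi, Set.mem_univ, forall_true_left, not_forall] at h
      obtain ⟨p, hp⟩ := h
      exact (Finset.prod_eq_zero (Finset.mem_univ p)
        (Set.indicator_of_notMem hp
          (fun u : ℝ => Complex.exp (Complex.I * cf a a' p * (u : ℂ))))).symm
  rw [integral_congr_ae (Filter.Eventually.of_forall hind)]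
  rw [MeasureTheory.volume_pi, MeasureTheory.integral_fintype_prod_eq_prod (ι := Fin n × Fin m)
    (fun p u => Set.indicator (Set.Icc 0 (2*π))
      (fun u : ℝ => Complex.exp (Complex.I * cf a a' p * (u : ℂ))) u)]
  have hcoord : ∀ p : Fin n × Fin m,
      (∫ u : ℝ, Set.indicator (Set.Icc 0 (2*π))
        (fun u : ℝ => Complex.exp (Complex.I * cf a a' p * (u : ℂ))) u)
      = if cf a a' p = 0 then ((2*π : ℝ) : ℂ) else 0 := by
    intro p
    rw [integral_indicator measurableSet_Icc]
    exact coord_int _ (cf_cases a a' p)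
  rw [Finset.prod_congr rfl fun p _ => hcoord p]
  by_cases h : a = a'
  · subst h
    have : ∀ p : Fin n × Fin m, cf a a p = 0 := fun p => by simp [cf]
    simp only [this, if_true, if_pos rfl, Finset.prod_const, Finset.card_univ,
      Fintype.card_prod, Fintype.card_fin]
    push_cast
    ring
  · rw [if_neg h]
    obtain ⟨j, hj⟩ := Function.ne_iff.mp h
    refine Finset.prod_eq_zero (Finset.mem_univ (j, a j)) ?_
    rw [if_neg]
    simp [cf, hj.symm, Ne.symm hj]

/-- Eq. (25) of the paper: the phase-averaged probability of finding the quantum walk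
with random phase shifts (generalized Grover coin) at site `x` after `n` steps is the
incoherent sum `|κ|² Σ_{paths a from 0 to x} |Ξ(a)|²`. -/
theorem mean_probability_grover (d : ℕ) (hd : 1 ≤ d) (r t : ℂ) (n : ℕ) (hn : 1 ≤ n)
    (x : Fin d → ℤ) :
    (1 / (2 * π) ^ (n * (2 * d))) *
        ∫ θ in phaseCube n (2 * d),
          ∑ b : Fin (2 * d),
            ‖∑ a ∈ Finset.univ.filter
                (fun a : Fin n → Fin (2 * d) =>
                  (∑ j : Fin n, eZ d (a j)) = x ∧ a ⟨0, by omega⟩ = b),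
              Complex.exp (Complex.I * ((∑ j : Fin n, θ (j, a j) : ℝ) : ℂ)) *
                Xi (2 * d) n r t a *
                ((r - t) / (Real.sqrt (2 * d) : ℂ) + (Real.sqrt (2 * d) : ℂ) * t)‖ ^ 2
      = ‖(r - t) / (Real.sqrt (2 * d) : ℂ) + (Real.sqrt (2 * d) : ℂ) * t‖ ^ 2 *
          ∑ a ∈ Finset.univ.filter
              (fun a : Fin n → Fin (2 * d) => (∑ j : Fin n, eZ d (a j)) = x),
            ‖Xi (2 * d) n r t a‖ ^ 2 := by
  classical
  set κ : ℂ := (r - t) / (Real.sqrt (2 * d) : ℂ) + (Real.sqrt (2 * d) : ℂ) * t with hκdef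
  set c : (Fin n → Fin (2 * d)) → ℂ := fun a => Xi (2 * d) n r t a * κ with hcdef
  set φ : (Fin n → Fin (2 * d)) → (Fin n × Fin (2 * d) → ℝ) → ℂ :=
    fun a θ => Complex.exp (Complex.I * ((∑ j : Fin n, θ (j, a j) : ℝ) : ℂ)) with hφdef
  set s : Fin (2 * d) → Finset (Fin n → Fin (2 * d)) := fun b =>
    Finset.univ.filter
      (fun a : Fin n → Fin (2 * d) =>
        (∑ j : Fin n, eZ d (a j)) = x ∧ a ⟨0, by omega⟩ = b) with hsdef
  set X : ℝ := (2 * π) ^ (n * (2 * d)) with hXdef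
  -- continuity and integrability
  have hcpt : IsCompact (phaseCube n (2 * d)) := isCompact_univ_pi fun _ => isCompact_Icc
  have hcont : ∀ a : Fin n → Fin (2 * d), Continuous (φ a) := by
    intro a
    exact Complex.continuous_exp.comp
      (continuous_const.mul (Complex.continuous_ofReal.comp
        (continuous_finset_sum _ fun j _ => continuous_apply _)))
  have hint : ∀ a a' : Fin n → Fin (2 * d),
      IntegrableOn (fun θ => φ a θ * (starRingEnd ℂ) (φ a' θ)) (phaseCube n (2 * d)) :=
    fun a a' => ((hcont a).mul (continuous_star.comp (hcont a'))).continuousOn.integrableOn_compact hcpt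
  set F : (Fin n × Fin (2 * d) → ℝ) → ℂ := fun θ =>
    ∑ b : Fin (2 * d), ∑ a ∈ s b, ∑ a' ∈ s b,
      (c a * (starRingEnd ℂ) (c a')) * (φ a θ * (starRingEnd ℂ) (φ a' θ)) with hFdef
  have hFint : IntegrableOn F (phaseCube n (2 * d)) := by
    refine integrable_finset_sum _ fun b _ => integrable_finset_sum _ fun a _ =>
      integrable_finset_sum _ fun a' _ => ?_
    exact (hint a a').const_mul _
  -- pointwise identity for the integrand
  have hpt : ∀ θ : Fin n × Fin (2 * d) → ℝ,
      (∑ b : Fin (2 * d), ‖∑ a ∈ s b, φ a θ * Xi (2 * d) n r t a * κ‖ ^ 2) = (F θ).re := by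
    intro θ
    rw [hFdef]
    rw [Complex.re_sum]
    refine Finset.sum_congr rfl fun b _ => ?_
    have : ∑ a ∈ s b, φ a θ * Xi (2 * d) n r t a * κ = ∑ a ∈ s b, φ a θ * c a := by
      refine Finset.sum_congr rfl fun a _ => by rw [hcdef]; ring
    rw [this]
    have hz : ∀ z : ℂ, ‖z‖ ^ 2 = (z * (starRingEnd ℂ) z).re := by
      intro z
      rw [Complex.mul_conj, Complex.ofReal_re, Complex.normSq_eq_norm_sq]
    rw [hz]
    congr 1
    rw [map_sum, Finset.sum_mul_sum]
    refine Finset.sum_congr rfl fun a _ => Finset.sum_congr rfl fun a' _ => ?_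
    rw [map_mul]
    ring
  -- compute the integral of F
  have hIF : (∫ θ in phaseCube n (2 * d), F θ)
      = ∑ b : Fin (2 * d), ∑ a ∈ s b, ((‖c a‖ ^ 2 * X : ℝ) : ℂ) := by
    rw [hFdef, integral_finset_sum _ (fun b _ => integrable_finset_sum _ fun a _ =>
      integrable_finset_sum _ fun a' _ => (hint a a').const_mul _)]
    refine Finset.sum_congr rfl fun b _ => ?_
    rw [integral_finset_sum _ (fun a _ => integrable_finset_sum _ fun a' _ =>
      (hint a a').const_mul _)]
    refine Finset.sum_congr rfl fun a ha => ?_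
    rw [integral_finset_sum _ (fun a' _ => (hint a a').const_mul _)]
    have : ∀ a' ∈ s b,
        (∫ θ in phaseCube n (2 * d),
          (c a * (starRingEnd ℂ) (c a')) * (φ a θ * (starRingEnd ℂ) (φ a' θ)))
        = if a = a' then (c a * (starRingEnd ℂ) (c a')) * ((X : ℝ) : ℂ) else 0 := by
      intro a' _
      rw [MeasureTheory.integral_const_mul, key a a', mul_ite, mul_zero]
    rw [Finset.sum_congr rfl this, Finset.sum_ite_eq, if_pos ha, Complex.mul_conj,
      ← Complex.ofReal_mul]
    congr 1
    rw [Complex.normSq_eq_norm_sq]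
  -- put everything together
  calc (1 / (2 * π) ^ (n * (2 * d))) *
        ∫ θ in phaseCube n (2 * d),
          ∑ b : Fin (2 * d), ‖∑ a ∈ s b, φ a θ * Xi (2 * d) n r t a * κ‖ ^ 2
      = (1 / X) * ∫ θ in phaseCube n (2 * d), (F θ).re := by
        rw [← hXdef]
        congr 1
        exact integral_congr_ae (Filter.Eventually.of_forall hpt)
    _ = (1 / X) * (∫ θ in phaseCube n (2 * d), F θ).re := by
        congr 1
        have := Complex.reCLM.integral_comp_comm hFint
        simpa using this
    _ = (1 / X) * (X * ∑ b : Fin (2 * d), ∑ a ∈ s b, ‖c a‖ ^ 2) := by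
        rw [hIF]
        congr 1
        simp only [← Complex.ofReal_sum, Complex.ofReal_re]
        rw [Finset.mul_sum]
        refine Finset.sum_congr rfl fun b _ => ?_
        rw [Finset.mul_sum]
        exact Finset.sum_congr rfl fun a _ => mul_comm _ _
    _ = ∑ b : Fin (2 * d), ∑ a ∈ s b, ‖c a‖ ^ 2 := by
        have hX : X ≠ 0 := by
          rw [hXdef]
          positivity
        field_simp
    _ = ∑ a ∈ Finset.univ.filter
          (fun a : Fin n → Fin (2 * d) => (∑ j : Fin n, eZ d (a j)) = x), ‖c a‖ ^ 2 := by
        have : ∀ b, s b = (Finset.univ.filter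
            (fun a : Fin n → Fin (2 * d) => (∑ j : Fin n, eZ d (a j)) = x)).filter
            (fun a => a ⟨0, by omega⟩ = b) := by
          intro b
          rw [hsdef, Finset.filter_filter]
        simp_rw [this]
        rw [Finset.sum_fiberwise_eq_sum_filter]
        simp
    _ = ‖κ‖ ^ 2 * ∑ a ∈ Finset.univ.filter
          (fun a : Fin n → Fin (2 * d) => (∑ j : Fin n, eZ d (a j)) = x),
          ‖Xi (2 * d) n r t a‖ ^ 2 := by
        rw [Finset.mul_sum]
        refine Finset.sum_congr rfl fun a _ => ?_
        rw [hcdef]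
        rw [norm_mul, mul_pow]
        ring
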